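/- Fix T ⊆ [n] with n ∉ T. The number of signed permutations (ω,ε) of [n] with ω(1) ∈ T and all right-to-left maxima unbarred is 2|T|·1·3⋯(2n−3), and the number of signed permutations in D_n with ω(1) ∉ T ∪ {n} and all right-to-left maxima unbarred is (n−|T|−1)·1·3⋯(2n−3). In either case (n ∈ T or n ∉ T), the total of the two counts is (|T|+n−1)·1·3⋯(2n−3). -/

import Mathlib

open Finset

namespace CardInterpAux

variable {n : ℕ}

/-- total count of signed permutations with all RTL maxima unbarred -/
def G (n : ℕ) : ℕ :=
  ((Finset.univ : Finset (Equiv.Perm (Fin n) × (Fin n → ℤˣ))).filter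
    (fun p => ∀ i : Fin n, (∀ j : Fin n, i < j → p.1 j < p.1 i) → p.2 i = 1)).card

/-- extend a permutation of `Fin n` to `Fin (n+1)` with first value `t` -/
def extPerm (t : Fin (n + 1)) (σ : Equiv.Perm (Fin n)) : Equiv.Perm (Fin (n + 1)) :=
  ((finSuccEquiv' (0 : Fin (n + 1))).trans (Equiv.optionCongr σ)).trans (finSuccEquiv' t).symm

@[simp] lemma extPerm_zero (t : Fin (n + 1)) (σ : Equiv.Perm (Fin n)) :
    extPerm t σ 0 = t := by
  simp [extPerm]

@[simp] lemma extPerm_succ (t : Fin (n + 1)) (σ : Equiv.Perm (Fin n)) (j : Fin n) :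
    extPerm t σ j.succ = t.succAbove (σ j) := by
  have h0 : finSuccEquiv' (0 : Fin (n + 1)) j.succ = some j := by
    rw [← congrFun Fin.succAbove_zero j, finSuccEquiv'_succAbove]
  simp [extPerm, h0]

lemma extPerm_inj (t : Fin (n + 1)) {σ σ' : Equiv.Perm (Fin n)}
    (h : extPerm t σ = extPerm t σ') : σ = σ' := by
  apply Equiv.ext
  intro j
  have := congrArg (fun ω : Equiv.Perm (Fin (n+1)) => ω j.succ) h
  simp only [extPerm_succ] at this
  exact Fin.succAbove_right_injective this

lemma extPerm_surj (t : Fin (n + 1)) (ω : Equiv.Perm (Fin (n + 1))) (hω : ω 0 = t) :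
    ∃ σ : Equiv.Perm (Fin n), extPerm t σ = ω := by
  set O : Option (Fin n) ≃ Option (Fin n) :=
    ((finSuccEquiv' (0 : Fin (n + 1))).symm.trans ω).trans (finSuccEquiv' t) with hO
  have hOnone : O none = none := by simp [hO, hω]
  refine ⟨Equiv.removeNone O, ?_⟩
  apply Equiv.ext
  intro k
  induction k using Fin.cases with
  | zero => simp [hω]
  | succ j =>
    have hsome : ∃ x', O (some j) = some x' := by
      rcases h : O (some j) with _ | x
      · exact absurd (O.injective (h.trans hOnone.symm)) (by simp)
      · exact ⟨x, rfl⟩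
    have h1 : some (Equiv.removeNone O j) = O (some j) := Equiv.removeNone_some O hsome
    have h2 : O (some j) = finSuccEquiv' t (ω j.succ) := by
      simp only [hO, Equiv.trans_apply, ← congrFun Fin.succAbove_zero j, finSuccEquiv'_symm_some,
        Equiv.symm_apply_apply]
    rw [h2] at h1
    have := congrArg (finSuccEquiv' t).symm h1
    simp only [finSuccEquiv'_symm_some, Equiv.symm_apply_apply] at this
    simpa using this

lemma rtl_ext_iff (t : Fin (n + 1)) (σ : Equiv.Perm (Fin n)) (s : ℤˣ) (ε : Fin n → ℤˣ) :
    (∀ i : Fin (n + 1), (∀ j : Fin (n + 1), i < j → extPerm t σ j < extPerm t σ i) →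
        (Fin.cons s ε : Fin (n + 1) → ℤˣ) i = 1) ↔
      ((t = Fin.last n → s = 1) ∧
        ∀ i : Fin n, (∀ j : Fin n, i < j → σ j < σ i) → ε i = 1) := by
  constructor
  · intro h
    constructor
    · rintro rfl
      have := h 0 ?_
      · simpa using this
      · intro j hj
        induction j using Fin.cases with
        | zero => exact absurd hj (lt_irrefl _)
        | succ k =>
          simp only [extPerm_succ, extPerm_zero, Fin.succAbove_last]
          exact Fin.castSucc_lt_last _
    · intro i hi
      have := h i.succ ?_
      · simpa using this
      · intro j hj
        induction j using Fin.cases with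
        | zero => exact absurd hj (by simp [Fin.not_lt])
        | succ k =>
          simp only [extPerm_succ, Fin.succAbove_lt_succAbove_iff]
          exact hi k (by simpa using hj)
  · rintro ⟨h1, h2⟩ i hi
    induction i using Fin.cases with
    | zero =>
      simp only [Fin.cons_zero]
      apply h1
      by_contra ht
      obtain ⟨j, hj⟩ : ∃ j, extPerm t σ j = Fin.last n := ⟨_, (extPerm t σ).apply_symm_apply _⟩
      induction j using Fin.cases with
      | zero => exact ht (by simpa using hj)
      | succ k =>
        have := hi k.succ (Fin.succ_pos k)
        rw [hj, extPerm_zero] at this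
        exact absurd this (Fin.not_lt.2 (Fin.le_last t))
    | succ j =>
      simp only [Fin.cons_succ]
      apply h2 j
      intro k hk
      have := hi k.succ (by simpa using hk)
      simpa [Fin.succAbove_lt_succAbove_iff] using this


lemma count_t (t : Fin (n + 1)) :
    ((Finset.univ : Finset (Equiv.Perm (Fin (n+1)) × (Fin (n+1) → ℤˣ))).filter
      (fun p => p.1 0 = t ∧
        ∀ i : Fin (n+1), (∀ j : Fin (n+1), i < j → p.1 j < p.1 i) → p.2 i = 1)).card
    = (if t = Fin.last n then 1 else 2) * G n := by
  classical
  set S : Finset ℤˣ := if t = Fin.last n then {1} else Finset.univ with hS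
  have hScard : S.card = if t = Fin.last n then 1 else 2 := by
    split_ifs with h <;> simp [S, h]
  have key : (((Finset.univ : Finset (Equiv.Perm (Fin n) × (Fin n → ℤˣ))).filter
      (fun q => ∀ i : Fin n, (∀ j : Fin n, i < j → q.1 j < q.1 i) → q.2 i = 1)) ×ˢ S).card
      = ((Finset.univ : Finset (Equiv.Perm (Fin (n+1)) × (Fin (n+1) → ℤˣ))).filter
      (fun p => p.1 0 = t ∧
        ∀ i : Fin (n+1), (∀ j : Fin (n+1), i < j → p.1 j < p.1 i) → p.2 i = 1)).card := by
    apply Finset.card_nbij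
      (i := fun a => ((extPerm t a.1.1, Fin.cons a.2 a.1.2) :
        Equiv.Perm (Fin (n+1)) × (Fin (n+1) → ℤˣ)))
    · rintro ⟨⟨σ, ε⟩, sg⟩ ha
      simp only [Finset.mem_coe, Finset.mem_product, Finset.mem_filter, Finset.mem_univ, true_and] at ha
      obtain ⟨h2, hsg⟩ := ha
      have h1 : t = Fin.last n → sg = 1 := by
        intro hlast
        rw [hS, if_pos hlast] at hsg
        simpa using hsg
      simp only [Finset.mem_coe, Finset.mem_filter, Finset.mem_univ, true_and]
      exact ⟨extPerm_zero t σ, (rtl_ext_iff t σ sg ε).2 ⟨h1, h2⟩⟩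
    · rintro ⟨⟨σ, ε⟩, sg⟩ - ⟨⟨σ', ε'⟩, sg'⟩ - h
      simp only [Prod.mk.injEq] at h
      obtain ⟨hperm, hcons⟩ := h
      have hσ : σ = σ' := extPerm_inj t hperm
      have hsg : sg = sg' := by have := congrFun hcons 0; simpa using this
      have hε : ε = ε' := by
        funext j; have := congrFun hcons j.succ; simpa using this
      simp [hσ, hsg, hε]
    · rintro ⟨ω, ε⟩ hb
      simp only [Finset.coe_filter, Finset.mem_univ, true_and, Set.mem_setOf_eq] at hb
      obtain ⟨hb0, hbR⟩ := hb
      obtain ⟨σ, hσ⟩ := extPerm_surj t ω hb0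
      have hbR' : ∀ i : Fin (n+1), (∀ j : Fin (n+1), i < j → extPerm t σ j < extPerm t σ i) →
          (Fin.cons (ε 0) (Fin.tail ε) : Fin (n+1) → ℤˣ) i = 1 := by
        rw [hσ, Fin.cons_self_tail]; exact hbR
      obtain ⟨h1, h2⟩ := (rtl_ext_iff t σ (ε 0) (Fin.tail ε)).1 hbR'
      refine ⟨((σ, Fin.tail ε), ε 0), ?_, ?_⟩
      · simp only [Finset.coe_product, Set.mem_prod, Finset.mem_coe, Finset.mem_filter,
          Finset.mem_univ, true_and]
        refine ⟨h2, ?_⟩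
        rw [hS]
        split_ifs with h
        · simp [h1 h]
        · exact Finset.mem_univ _
      · simp only [Prod.mk.injEq]
        exact ⟨hσ, Fin.cons_self_tail ε⟩
  rw [← key, Finset.card_product, ← hScard, mul_comm]
  rfl

lemma count_t_even (t : Fin (n + 1)) (ht : t ≠ Fin.last n) :
    ((Finset.univ : Finset (Equiv.Perm (Fin (n+1)) × (Fin (n+1) → ℤˣ))).filter
      (fun p => p.1 0 = t ∧ (∏ i, p.2 i) = 1 ∧
        ∀ i : Fin (n+1), (∀ j : Fin (n+1), i < j → p.1 j < p.1 i) → p.2 i = 1)).card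
    = G n := by
  classical
  rw [G]
  symm
  apply Finset.card_nbij
    (i := fun a => ((extPerm t a.1, Fin.cons (∏ i, a.2 i)⁻¹ a.2) :
      Equiv.Perm (Fin (n+1)) × (Fin (n+1) → ℤˣ)))
  · rintro ⟨σ, ε⟩ ha
    simp only [Finset.mem_coe, Finset.mem_filter, Finset.mem_univ, true_and] at ha ⊢
    refine ⟨extPerm_zero t σ, ?_, ?_⟩
    · rw [Fin.prod_cons]
      exact inv_mul_cancel _
    · exact (rtl_ext_iff t σ _ ε).2 ⟨fun h => absurd h ht, ha⟩
  · rintro ⟨σ, ε⟩ - ⟨σ', ε'⟩ - h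
    simp only [Prod.mk.injEq] at h
    obtain ⟨hperm, hcons⟩ := h
    have hσ : σ = σ' := extPerm_inj t hperm
    have hε : ε = ε' := by
      funext j; have := congrFun hcons j.succ; simpa using this
    simp [hσ, hε]
  · rintro ⟨ω, ε⟩ hb
    simp only [Finset.coe_filter, Finset.mem_univ, true_and, Set.mem_setOf_eq] at hb
    obtain ⟨hb0, hbP, hbR⟩ := hb
    obtain ⟨σ, hσ⟩ := extPerm_surj t ω hb0
    have hbR' : ∀ i : Fin (n+1), (∀ j : Fin (n+1), i < j → extPerm t σ j < extPerm t σ i) →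
        (Fin.cons (ε 0) (Fin.tail ε) : Fin (n+1) → ℤˣ) i = 1 := by
      rw [hσ, Fin.cons_self_tail]; exact hbR
    obtain ⟨h1, h2⟩ := (rtl_ext_iff t σ (ε 0) (Fin.tail ε)).1 hbR'
    have hε0 : (∏ i, Fin.tail ε i)⁻¹ = ε 0 := by
      have : (∏ i, ε i) = ε 0 * ∏ i, Fin.tail ε i := by
        rw [← Fin.prod_cons (ε 0) (Fin.tail ε), Fin.cons_self_tail]
      rw [this] at hbP
      exact (eq_inv_of_mul_eq_one_left hbP).symm
    refine ⟨(σ, Fin.tail ε), ?_, ?_⟩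
    · simp only [Finset.mem_coe, Finset.mem_filter, Finset.mem_univ, true_and]
      exact h2
    · simp only [Prod.mk.injEq]
      refine ⟨hσ, ?_⟩
      rw [hε0, Fin.cons_self_tail]


lemma G_zero : G 0 = 1 := by
  rw [G, Finset.filter_true_of_mem (fun p _ => fun i => i.elim0)]
  simp [Finset.card_univ]

lemma sum_ite_last {n : ℕ} (T : Finset (Fin (n+1))) :
    (∑ t ∈ T, if t = Fin.last n then 1 else 2) =
      2 * T.card - (if Fin.last n ∈ T then 1 else 0) := by
  classical
  have h2 : ∀ s : Finset (Fin (n+1)), Fin.last n ∉ s →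
      (∑ t ∈ s, if t = Fin.last n then 1 else 2) = 2 * s.card := by
    intro s hs
    rw [Finset.sum_congr rfl (fun t ht => if_neg (by rintro rfl; exact hs ht)),
      Finset.sum_const, smul_eq_mul, mul_comm]
  by_cases h : Fin.last n ∈ T
  · have hpos : 1 ≤ T.card := Finset.card_pos.2 ⟨_, h⟩
    rw [← Finset.add_sum_erase _ _ h, if_pos rfl, h2 _ (Finset.notMem_erase _ _),
      Finset.card_erase_of_mem h, if_pos h]
    omega
  · rw [h2 T h, if_neg h, Nat.sub_zero]

lemma G_succ (n : ℕ) : G (n + 1) = (2 * n + 1) * G n := by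
  classical
  rw [G, Finset.card_eq_sum_card_fiberwise (f := fun p => p.1 0)
    (t := (Finset.univ : Finset (Fin (n+1)))) (fun x _ => Finset.mem_univ _)]
  have step : ∀ t : Fin (n+1),
      (((Finset.univ : Finset (Equiv.Perm (Fin (n+1)) × (Fin (n+1) → ℤˣ))).filter
        (fun p => ∀ i : Fin (n+1), (∀ j : Fin (n+1), i < j → p.1 j < p.1 i) → p.2 i = 1)).filter
          (fun p => p.1 0 = t)).card = (if t = Fin.last n then 1 else 2) * G n := by
    intro t
    rw [Finset.filter_filter, ← count_t t]
    apply congrArg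
    apply Finset.filter_congr
    intro p _
    exact and_comm
  simp only [step]
  rw [← Finset.sum_mul]
  congr 1
  rw [sum_ite_last]
  simp only [Finset.mem_univ, if_pos, Finset.card_univ, Fintype.card_fin]
  omega

lemma G_eq (n : ℕ) : G n = ∏ k ∈ Finset.range n, (2 * k + 1) := by
  induction n with
  | zero => simpa using G_zero
  | succ n ih =>
    rw [G_succ, ih, Finset.prod_range_succ]
    ring

lemma lemA {n : ℕ} (T : Finset (Fin (n+1))) :
    ((Finset.univ : Finset (Equiv.Perm (Fin (n+1)) × (Fin (n+1) → ℤˣ))).filter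
      (fun p => p.1 0 ∈ T ∧
        ∀ i : Fin (n+1), (∀ j : Fin (n+1), i < j → p.1 j < p.1 i) → p.2 i = 1)).card
    = (∑ t ∈ T, if t = Fin.last n then 1 else 2) * G n := by
  classical
  rw [Finset.card_eq_sum_card_fiberwise (f := fun p => p.1 0) (t := T)
    (fun x hx => (Finset.mem_filter.1 hx).2.1), Finset.sum_mul]
  apply Finset.sum_congr rfl
  intro t ht
  rw [Finset.filter_filter, ← count_t t]
  apply congrArg
  apply Finset.filter_congr
  intro p _
  constructor
  · rintro ⟨⟨-, hR⟩, h0⟩; exact ⟨h0, hR⟩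
  · rintro ⟨h0, hR⟩; exact ⟨⟨h0 ▸ ht, hR⟩, h0⟩

lemma lemB {n : ℕ} (T : Finset (Fin (n+1))) :
    ((Finset.univ : Finset (Equiv.Perm (Fin (n+1)) × (Fin (n+1) → ℤˣ))).filter
      (fun p => (∏ i, p.2 i) = 1 ∧ p.1 0 ∉ T ∧ p.1 0 ≠ Fin.last n ∧
        ∀ i : Fin (n+1), (∀ j : Fin (n+1), i < j → p.1 j < p.1 i) → p.2 i = 1)).card
    = (Finset.univ.filter (fun t : Fin (n+1) => t ∉ T ∧ t ≠ Fin.last n)).card * G n := by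
  classical
  rw [Finset.card_eq_sum_card_fiberwise (f := fun p => p.1 0)
      (t := Finset.univ.filter (fun t : Fin (n+1) => t ∉ T ∧ t ≠ Fin.last n))
      (fun x hx => by
        have h := (Finset.mem_filter.1 hx).2
        exact Finset.mem_filter.2 ⟨Finset.mem_univ _, h.2.1, h.2.2.1⟩)]
  have step : ∀ t ∈ Finset.univ.filter (fun t : Fin (n+1) => t ∉ T ∧ t ≠ Fin.last n),
      (((Finset.univ : Finset (Equiv.Perm (Fin (n+1)) × (Fin (n+1) → ℤˣ))).filter
        (fun p => (∏ i, p.2 i) = 1 ∧ p.1 0 ∉ T ∧ p.1 0 ≠ Fin.last n ∧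
          ∀ i : Fin (n+1), (∀ j : Fin (n+1), i < j → p.1 j < p.1 i) → p.2 i = 1)).filter
          (fun p => p.1 0 = t)).card = G n := by
    intro t ht
    have htt := (Finset.mem_filter.1 ht).2
    obtain ⟨hT, hl⟩ := htt
    rw [Finset.filter_filter, ← count_t_even t hl]
    apply congrArg
    apply Finset.filter_congr
    intro p _
    constructor
    · rintro ⟨⟨hP, -, -, hR⟩, h0⟩; exact ⟨h0, hP, hR⟩
    · rintro ⟨h0, hP, hR⟩; exact ⟨⟨hP, h0 ▸ hT, h0 ▸ hl, hR⟩, h0⟩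
  exact Eq.trans (Finset.sum_congr rfl step)
    (by rw [Finset.sum_const, smul_eq_mul])

lemma card_free {n : ℕ} (T : Finset (Fin (n+1))) :
    (Finset.univ.filter (fun t : Fin (n+1) => t ∉ T ∧ t ≠ Fin.last n)).card
      = (n + 1) - T.card - (if Fin.last n ∈ T then 0 else 1) := by
  classical
  have he : Finset.univ.filter (fun t : Fin (n+1) => t ∉ T ∧ t ≠ Fin.last n)
      = Tᶜ.erase (Fin.last n) := by
    ext t
    simp [Finset.mem_erase, and_comm]
  by_cases h : Fin.last n ∈ T
  · rw [he, Finset.card_erase_eq_ite, if_neg (by simpa using h), Finset.card_compl,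
      Fintype.card_fin, if_pos h, Nat.sub_zero]
  · rw [he, Finset.card_erase_eq_ite, if_pos (Finset.mem_compl.2 h), Finset.card_compl,
      Fintype.card_fin, if_neg h]

end CardInterpAux

/-- Fix `T ⊆ [n]`.  If `n ∉ T`, the number of signed permutations `(ω,ε)` of `[n]`
with `ω(1) ∈ T` and all right-to-left maxima unbarred is `2|T|·1·3⋯(2n-3)`, and the
number of even-signed permutations (in `D_n`) with `ω(1) ∉ T ∪ {n}` and all
right-to-left maxima unbarred is `(n-|T|-1)·1·3⋯(2n-3)`.  In either case
(`n ∈ T` or `n ∉ T`) the total of the two counts is `(|T|+n-1)·1·3⋯(2n-3)`. -/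
theorem card_interpolating_not_mem_T {n : ℕ} (hn : 2 ≤ n) (T : Finset (Fin n)) :
    (((⟨n - 1, by omega⟩ : Fin n) ∉ T →
      ((Finset.univ : Finset (Equiv.Perm (Fin n) × (Fin n → ℤˣ))).filter
          (fun p => p.1 ⟨0, by omega⟩ ∈ T ∧
            ∀ i : Fin n, (∀ j : Fin n, i < j → p.1 j < p.1 i) → p.2 i = 1)).card
        = 2 * T.card * ∏ k ∈ Finset.range (n - 1), (2 * k + 1) ∧
      ((Finset.univ : Finset (Equiv.Perm (Fin n) × (Fin n → ℤˣ))).filter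
          (fun p => (∏ i, p.2 i) = 1 ∧
            p.1 ⟨0, by omega⟩ ∉ T ∧ p.1 ⟨0, by omega⟩ ≠ ⟨n - 1, by omega⟩ ∧
            ∀ i : Fin n, (∀ j : Fin n, i < j → p.1 j < p.1 i) → p.2 i = 1)).card
        = (n - T.card - 1) * ∏ k ∈ Finset.range (n - 1), (2 * k + 1))) ∧
    ((Finset.univ : Finset (Equiv.Perm (Fin n) × (Fin n → ℤˣ))).filter
        (fun p => p.1 ⟨0, by omega⟩ ∈ T ∧
          ∀ i : Fin n, (∀ j : Fin n, i < j → p.1 j < p.1 i) → p.2 i = 1)).card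
      + ((Finset.univ : Finset (Equiv.Perm (Fin n) × (Fin n → ℤˣ))).filter
          (fun p => (∏ i, p.2 i) = 1 ∧
            p.1 ⟨0, by omega⟩ ∉ T ∧ p.1 ⟨0, by omega⟩ ≠ ⟨n - 1, by omega⟩ ∧
            ∀ i : Fin n, (∀ j : Fin n, i < j → p.1 j < p.1 i) → p.2 i = 1)).card
      = (T.card + n - 1) * ∏ k ∈ Finset.range (n - 1), (2 * k + 1) := by
  obtain ⟨m, rfl⟩ : ∃ m, n = m + 1 := ⟨n - 1, by omega⟩
  have hTle : T.card ≤ m + 1 := by simpa using Finset.card_le_univ T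
  have hprod : CardInterpAux.G m = ∏ k ∈ Finset.range (m + 1 - 1), (2 * k + 1) :=
    CardInterpAux.G_eq m
  refine ⟨fun hT => ⟨?_, ?_⟩, ?_⟩
  · refine Eq.trans (CardInterpAux.lemA T) ?_
    rw [CardInterpAux.sum_ite_last, if_neg (show Fin.last m ∉ T from hT), Nat.sub_zero,
      ← hprod]
  · refine Eq.trans (CardInterpAux.lemB T) ?_
    rw [CardInterpAux.card_free, if_neg (show Fin.last m ∉ T from hT), ← hprod]
  · refine Eq.trans (congrArg₂ (· + ·) (CardInterpAux.lemA T) (CardInterpAux.lemB T)) ?_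
    beta_reduce
    rw [CardInterpAux.sum_ite_last, CardInterpAux.card_free, ← add_mul, ← hprod]
    have hfac : (2 * T.card - (if Fin.last m ∈ T then 1 else 0))
        + (m + 1 - T.card - (if Fin.last m ∈ T then 0 else 1)) = T.card + (m + 1) - 1 := by
      by_cases h : Fin.last m ∈ T
      · have h1 : 1 ≤ T.card := Finset.card_pos.2 ⟨_, h⟩
        simp only [h, if_true]
        omega
      · have hsub : T ⊆ Finset.univ.erase (Fin.last m) := fun x hx =>
          Finset.mem_erase.2 ⟨fun e => h (e ▸ hx), Finset.mem_univ x⟩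
        have h2 : T.card ≤ m := by
          have := Finset.card_le_card hsub
          rwa [Finset.card_erase_of_mem (Finset.mem_univ _), Finset.card_univ,
            Fintype.card_fin, Nat.add_sub_cancel] at this
        simp only [h, if_false]
        omega
    rw [hfac]
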